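/- (Iteration of a smoothing commutator estimate implies polynomial growth) Let U(t,s) be a propagator unitary on 𝓗⁰ such that for some θ ∈ (0,1] and constants C_k, ‖U(t,s)ψ‖_{2k} ≤ ‖ψ‖_{2k} + C_k ∫_s^t ‖U(r,s)ψ‖_{2(k−θ)} dr for all k in an admissible range (with ‖·‖_{2j} interpreted as ‖·‖₀ when j ≤ 0). Then choosing m with mθ ≥ k, there exists C_{k,m} such that ‖U(t,s)ψ‖_{2k} ≤ C_{k,m}⟨t−s⟩^m (‖ψ‖_{2k} + ‖ψ‖₀) for all t ≥ s. -/
import Mathlib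


/-- (Iteration of a smoothing commutator estimate implies polynomial
growth.) Let `U(t,s)` be a propagator which is unitary on `𝓗⁰` and suppose the scale of
norms `nrm j = ‖·‖_{2j}` (with `nrm j = ‖·‖₀` for `j ≤ 0`, monotone in `j`) satisfies, for
some `θ ∈ (0,1]` and a constant `C`, the recursive integral inequality
`‖U(t,s)ψ‖_{2j} ≤ ‖ψ‖_{2j} + C ∫_s^t ‖U(r,s)ψ‖_{2(j−θ)} dr` for all `0 < j ≤ k`.
Then, choosing `m` with `mθ ≥ k`, there exists `C'` such that
`‖U(t,s)ψ‖_{2k} ≤ C' ⟨t−s⟩^m (‖ψ‖_{2k} + ‖ψ‖₀)` for all `t ≥ s`. -/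
theorem iterated_commutator_polynomial_growth
    {E : Type*} [NormedAddCommGroup E] [NormedSpace ℂ E]
    (U : ℝ → ℝ → E →L[ℂ] E)
    (hunit : ∀ (t s : ℝ) (ψ : E), ‖U t s ψ‖ = ‖ψ‖)
    (nrm : ℝ → E → ℝ)
    (hzero : ∀ j : ℝ, j ≤ 0 → ∀ ψ : E, nrm j ψ = ‖ψ‖)
    (hnonneg : ∀ (j : ℝ) (ψ : E), 0 ≤ nrm j ψ)
    (hmono : ∀ i j : ℝ, i ≤ j → ∀ ψ : E, nrm i ψ ≤ nrm j ψ)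
    (θ : ℝ) (hθ0 : 0 < θ) (hθ1 : θ ≤ 1)
    (k : ℝ) (hk : 0 < k) (C : ℝ) (hC : 0 < C)
    (hrec : ∀ j : ℝ, 0 < j → j ≤ k → ∀ s t : ℝ, s ≤ t → ∀ ψ : E,
      nrm j (U t s ψ) ≤ nrm j ψ + C * ∫ r in s..t, nrm (j - θ) (U r s ψ))
    (m : ℕ) (hm : k ≤ (m : ℝ) * θ) :
    ∃ C' : ℝ, 0 < C' ∧ ∀ s t : ℝ, s ≤ t → ∀ ψ : E,
      nrm k (U t s ψ) ≤ C' * Real.sqrt (1 + (t - s) ^ 2) ^ m * (nrm k ψ + ‖ψ‖) := by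

  have hg1 : ∀ x : ℝ, 1 ≤ Real.sqrt (1 + x ^ 2) := by
    intro x
    have h := Real.sqrt_le_sqrt (show (1:ℝ) ≤ 1 + x ^ 2 by nlinarith [sq_nonneg x])
    simpa using h
  have key : ∀ n : ℕ, ∃ Cn : ℝ, 0 < Cn ∧ ∀ j : ℝ, j ≤ (n : ℝ) * θ → j ≤ k →
      ∀ s t : ℝ, s ≤ t → ∀ ψ : E,
      nrm j (U t s ψ) ≤ Cn * Real.sqrt (1 + (t - s) ^ 2) ^ n * (nrm k ψ + ‖ψ‖) := by
    intro n
    induction n with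
    | zero =>
      refine ⟨1, one_pos, ?_⟩
      intro j hj hjk s t hst ψ
      simp only [Nat.cast_zero, zero_mul] at hj
      rw [hzero j hj, hunit, pow_zero]
      nlinarith [hnonneg k ψ, norm_nonneg ψ]
    | succ n ih =>
      obtain ⟨Cn, hCn, hCnh⟩ := ih
      refine ⟨1 + C * Cn, by positivity, ?_⟩
      intro j hj hjk s t hst ψ
      have hM : 0 ≤ nrm k ψ + ‖ψ‖ := add_nonneg (hnonneg k ψ) (norm_nonneg ψ)
      have hS1 : (1:ℝ) ≤ Real.sqrt (1 + (t - s) ^ 2) := hg1 _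
      have hSpow : (1:ℝ) ≤ Real.sqrt (1 + (t - s) ^ 2) ^ (n + 1) := one_le_pow₀ hS1
      have hSn : (0:ℝ) ≤ Real.sqrt (1 + (t - s) ^ 2) ^ n := pow_nonneg (Real.sqrt_nonneg _) n
      push_cast at hj
      set S := Real.sqrt (1 + (t - s) ^ 2) with hSdef
      rcases le_or_gt j 0 with hj0 | hj0
      · rw [hzero j hj0, hunit]
        have h1 : ‖ψ‖ ≤ nrm k ψ + ‖ψ‖ := le_add_of_nonneg_left (hnonneg k ψ)
        have h2 : nrm k ψ + ‖ψ‖ ≤ S ^ (n + 1) * (nrm k ψ + ‖ψ‖) :=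
          le_mul_of_one_le_left hM hSpow
        have h3 : S ^ (n + 1) * (nrm k ψ + ‖ψ‖) ≤ (1 + C * Cn) * (S ^ (n + 1) * (nrm k ψ + ‖ψ‖)) :=
          le_mul_of_one_le_left (by positivity) (by nlinarith)
        calc ‖ψ‖ ≤ nrm k ψ + ‖ψ‖ := h1
          _ ≤ S ^ (n + 1) * (nrm k ψ + ‖ψ‖) := h2
          _ ≤ (1 + C * Cn) * (S ^ (n + 1) * (nrm k ψ + ‖ψ‖)) := h3
          _ = (1 + C * Cn) * S ^ (n + 1) * (nrm k ψ + ‖ψ‖) := by ring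
      · have hrec' := hrec j hj0 hjk s t hst ψ
        set B := Cn * S ^ n * (nrm k ψ + ‖ψ‖) with hB
        have hB0 : 0 ≤ B := by positivity
        have hbound : ∀ r ∈ Set.Icc s t, nrm (j - θ) (U r s ψ) ≤ B := by
          intro r hr
          have h1 := hCnh (j - θ) (by linarith) (by linarith) s r hr.1 ψ
          refine h1.trans ?_
          rw [hB]
          gcongr
          exact Real.sqrt_le_sqrt (by nlinarith [hr.1, hr.2])
        have hint : (∫ r in s..t, nrm (j - θ) (U r s ψ)) ≤ (t - s) * B := by
          by_cases hI : IntervalIntegrable (fun r => nrm (j - θ) (U r s ψ))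
              MeasureTheory.volume s t
          · calc (∫ r in s..t, nrm (j - θ) (U r s ψ)) ≤ ∫ _ in s..t, B :=
                intervalIntegral.integral_mono_on hst hI intervalIntegrable_const hbound
            _ = (t - s) * B := by rw [intervalIntegral.integral_const, smul_eq_mul]
          · rw [intervalIntegral.integral_undef hI]
            exact mul_nonneg (by linarith) hB0
        have hts : t - s ≤ S := by
          rw [hSdef, show t - s = Real.sqrt ((t - s) ^ 2) from (Real.sqrt_sq (by linarith)).symm]
          exact Real.sqrt_le_sqrt (by nlinarith [Real.sq_sqrt (show (0:ℝ) ≤ (t-s)^2 by positivity)])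
        have hmkj : nrm j ψ ≤ nrm k ψ := hmono j k hjk ψ
        have h2 : nrm j (U t s ψ) ≤ nrm k ψ + C * ((t - s) * B) := by
          have := mul_le_mul_of_nonneg_left hint hC.le
          linarith
        have h3 : (t - s) * B ≤ S * B := mul_le_mul_of_nonneg_right hts hB0
        have h3' : S * B = Cn * S ^ (n + 1) * (nrm k ψ + ‖ψ‖) := by rw [hB, pow_succ]; ring
        have h4 : nrm k ψ + ‖ψ‖ ≤ S ^ (n + 1) * (nrm k ψ + ‖ψ‖) :=
          le_mul_of_one_le_left hM hSpow
        have h5 : nrm k ψ ≤ nrm k ψ + ‖ψ‖ := le_add_of_nonneg_right (norm_nonneg ψ)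
        have h6 : C * ((t - s) * B) ≤ C * (Cn * S ^ (n + 1) * (nrm k ψ + ‖ψ‖)) := by
          rw [← h3']
          exact mul_le_mul_of_nonneg_left h3 hC.le
        have hring : (1 + C * Cn) * S ^ (n + 1) * (nrm k ψ + ‖ψ‖)
            = S ^ (n + 1) * (nrm k ψ + ‖ψ‖) + C * (Cn * S ^ (n + 1) * (nrm k ψ + ‖ψ‖)) := by
          ring
        linarith
  obtain ⟨Cm, hCm, hCmh⟩ := key m
  exact ⟨Cm, hCm, fun s t hst ψ => hCmh k hm le_rfl s t hst ψ⟩
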